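/- Let q > 1 be a real number, k ≥ 0 an integer, and 0 < u < 1/q. Define the transform Gf(u) = (u^{-2} - q) ∫_0^∞ e^{-(qu + 1/u)t} e^{(q+1)t} f(t) dt. Then applying G to the function f(t) = e^{-(q+1)t} q^{-k/2} I_k(2√q t) yields Gf(u) = u^{k-1}. -/

import Mathlib

open Finset MeasureTheory Real

private lemma choose_le_pow4 (k n : ℕ) : (2*n+k).choose n ≤ 2^k * 4^n := by
  have h1 : (2*n+k).choose n ≤ 2^(2*n+k) := by
    calc (2*n+k).choose n ≤ ∑ m ∈ range (2*n+k+1), (2*n+k).choose m :=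
          Finset.single_le_sum (fun i _ => Nat.zero_le _) (by simp [Finset.mem_range]; omega)
      _ = 2^(2*n+k) := Nat.sum_range_choose _
  calc (2*n+k).choose n ≤ 2^(2*n+k) := h1
    _ = 2^k * 4^n := by rw [pow_add, pow_mul]; ring

private lemma catalan_le_pow4 (n : ℕ) : catalan n ≤ 4^n := by
  have h1 : (n+1) * catalan n = (2*n).choose n := by
    rw [succ_mul_catalan_eq_centralBinom, Nat.centralBinom]
  have h2 : catalan n ≤ (n+1) * catalan n := Nat.le_mul_of_pos_left _ (by omega)
  have h3 := choose_le_pow4 0 n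
  simp only [add_zero, pow_zero, one_mul] at h3
  omega

private lemma summable_chooseS (k : ℕ) {z : ℝ} (hz0 : 0 ≤ z) (hz : z < 1/4) :
    Summable (fun n => ((2*n+k).choose n : ℝ) * z^n) := by
  have hg : Summable (fun n : ℕ => (2:ℝ)^k * (4*z)^n) := by
    apply Summable.mul_left
    apply summable_geometric_of_lt_one (by positivity) (by linarith)
  apply Summable.of_nonneg_of_le (fun n => by positivity) (fun n => ?_) hg
  calc ((2*n+k).choose n : ℝ) * z^n ≤ (2^k * 4^n) * z^n := by
        apply mul_le_mul_of_nonneg_right _ (by positivity)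
        exact_mod_cast choose_le_pow4 k n
    _ = 2^k * (4*z)^n := by rw [mul_pow]; ring

private lemma summable_catS {z : ℝ} (hz0 : 0 ≤ z) (hz : z < 1/4) :
    Summable (fun n => (catalan n : ℝ) * z^n) := by
  have hg : Summable (fun n : ℕ => (4*z)^n) :=
    summable_geometric_of_lt_one (by positivity) (by linarith)
  apply Summable.of_nonneg_of_le (fun n => by positivity) (fun n => ?_) hg
  calc (catalan n : ℝ) * z^n ≤ (4^n : ℝ) * z^n := by
        apply mul_le_mul_of_nonneg_right _ (by positivity)
        exact_mod_cast catalan_le_pow4 n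
    _ = (4*z)^n := by rw [mul_pow]

private lemma catalan_succ_range (n : ℕ) :
    catalan (n+1) = ∑ i ∈ range (n+1), catalan i * catalan (n - i) := by
  rw [catalan_succ']
  rw [Finset.Nat.sum_antidiagonal_eq_sum_range_succ_mk]

section GF
variable {z : ℝ}

private noncomputable def catGF (z : ℝ) : ℝ := ∑' n, (catalan n : ℝ) * z^n

-- norm-summability helper
private lemma summable_norm_of_nonneg {f : ℕ → ℝ} (hf : ∀ n, 0 ≤ f n) (h : Summable f) :
    Summable (fun n => ‖f n‖) := by
  refine h.congr fun n => ?_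
  rw [Real.norm_eq_abs, abs_of_nonneg (hf n)]

private lemma catGF_quad (hz0 : 0 ≤ z) (hz : z < 1/4) :
    z * catGF z ^ 2 = catGF z - 1 := by
  have hsum := (by
    have hg : Summable (fun n : ℕ => (4*z)^n) :=
      summable_geometric_of_lt_one (by positivity) (by linarith)
    apply Summable.of_nonneg_of_le (fun n => by positivity) (fun n => ?_) hg
    calc (catalan n : ℝ) * z^n ≤ (4^n : ℝ) * z^n := by
          apply mul_le_mul_of_nonneg_right _ (by positivity)
          exact_mod_cast catalan_le_pow4 n
      _ = (4*z)^n := by rw [mul_pow]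
    : Summable (fun n => (catalan n : ℝ) * z^n))
  have hnorm : Summable (fun n => ‖(catalan n : ℝ) * z^n‖) :=
    summable_norm_of_nonneg (fun n => by positivity) hsum
  have hC : catGF z * catGF z =
      ∑' n, ∑ i ∈ range (n+1), ((catalan i : ℝ) * z^i) * ((catalan (n-i) : ℝ) * z^(n-i)) :=
    tsum_mul_tsum_eq_tsum_sum_range_of_summable_norm hnorm hnorm
  have hinner : ∀ n, ∑ i ∈ range (n+1), ((catalan i : ℝ) * z^i) * ((catalan (n-i) : ℝ) * z^(n-i))
      = (catalan (n+1) : ℝ) * z^n := by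
    intro n
    rw [catalan_succ_range]
    push_cast
    rw [Finset.sum_mul]
    refine Finset.sum_congr rfl fun i hi => ?_
    have hi' : i ≤ n := by simpa using Nat.lt_succ_iff.mp (Finset.mem_range.mp hi)
    have hp : z^i * z^(n-i) = z^n := by rw [← pow_add, Nat.add_sub_cancel' hi']
    rw [mul_mul_mul_comm, hp]
  have hshift := Summable.sum_add_tsum_nat_add 1 hsum
  simp only [Finset.range_one, Finset.sum_singleton] at hshift
  -- hshift : catalan 0 * z^0 + ∑' n, catalan (n+1) * z^(n+1) = catGF z
  have : z * (catGF z * catGF z) = ∑' n, (catalan (n+1) : ℝ) * z^(n+1) := by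
    rw [hC, ← tsum_mul_left]
    exact tsum_congr fun n => by rw [hinner n]; ring
  rw [pow_two, this]
  have h0 : ((catalan 0 : ℝ) * z^0) = 1 := by simp
  rw [h0] at hshift
  have hcat : catGF z = ∑' n, (catalan n : ℝ) * z^n := rfl
  rw [hcat]
  linarith
end GF
section GF2
open Finset
variable {z : ℝ}

private lemma catGF_partial_le (hz0 : 0 < z) (hz : z < 1/4) {ρ : ℝ} (hρ0 : 0 ≤ ρ)
    (hρ : 1 + z * ρ^2 ≤ ρ) : ∀ N, ∑ n ∈ range N, (catalan n : ℝ) * z^n ≤ ρ := by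
  intro N
  induction N with
  | zero => simpa using hρ0.trans_eq rfl
  | succ N ih =>
    set g : ℕ → ℝ := fun n => (catalan n : ℝ) * z^n with hg
    have hgnn : ∀ n, 0 ≤ g n := fun n => by positivity
    -- convolution inequality
    have hconv : ∑ i ∈ range N, (catalan (i+1) : ℝ) * z^i ≤ (∑ n ∈ range N, g n)^2 := by
      have hrw : ∀ i : ℕ, (catalan (i+1) : ℝ) * z^i
          = ∑ p ∈ Finset.HasAntidiagonal.antidiagonal i, g p.1 * g p.2 := by
        intro i
        rw [catalan_succ']
        push_cast
        rw [Finset.sum_mul]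
        refine Finset.sum_congr rfl fun p hp => ?_
        have hps : p.1 + p.2 = i := Finset.HasAntidiagonal.mem_antidiagonal.mp hp
        simp only [hg]
        rw [show z^i = z^p.1 * z^p.2 by rw [← pow_add, hps]]
        ring
      simp only [hrw]
      rw [← Finset.sum_biUnion]
      · have hsub : (range N).biUnion Finset.HasAntidiagonal.antidiagonal ⊆ range N ×ˢ range N := by
          intro p hp
          obtain ⟨i, hi, hpi⟩ := Finset.mem_biUnion.mp hp
          have hps : p.1 + p.2 = i := Finset.HasAntidiagonal.mem_antidiagonal.mp hpi
          have hiN : i < N := Finset.mem_range.mp hi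
          exact Finset.mem_product.mpr ⟨Finset.mem_range.mpr (by omega),
            Finset.mem_range.mpr (by omega)⟩
        calc ∑ p ∈ (range N).biUnion Finset.HasAntidiagonal.antidiagonal, g p.1 * g p.2
            ≤ ∑ p ∈ range N ×ˢ range N, g p.1 * g p.2 :=
              Finset.sum_le_sum_of_subset_of_nonneg hsub
                (fun p _ _ => mul_nonneg (hgnn _) (hgnn _))
          _ = (∑ n ∈ range N, g n)^2 := by
              rw [pow_two, Finset.sum_mul_sum, Finset.sum_product]
      · intro a _ b _ hab
        simp only [Finset.disjoint_left]
        intro p hpa hpb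
        exact hab (by rw [← Finset.HasAntidiagonal.mem_antidiagonal.mp hpa,
          Finset.HasAntidiagonal.mem_antidiagonal.mp hpb])
    have hstep : ∑ n ∈ range (N+1), g n = 1 + z * ∑ i ∈ range N, (catalan (i+1) : ℝ) * z^i := by
      rw [Finset.sum_range_succ']
      simp only [hg, catalan_zero, Nat.cast_one, pow_zero, mul_one, one_mul]
      rw [Finset.mul_sum, add_comm]
      congr 1
      refine Finset.sum_congr rfl fun i _ => ?_
      ring
    have hP0 : 0 ≤ ∑ n ∈ range N, g n := Finset.sum_nonneg fun n _ => hgnn n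
    have hsq : (∑ n ∈ range N, g n)^2 ≤ ρ^2 := pow_le_pow_left₀ hP0 ih 2
    calc ∑ n ∈ range (N+1), g n = 1 + z * ∑ i ∈ range N, (catalan (i+1) : ℝ) * z^i := hstep
      _ ≤ 1 + z * (∑ n ∈ range N, g n)^2 := by nlinarith
      _ ≤ 1 + z * ρ^2 := by nlinarith
      _ ≤ ρ := hρ

private lemma catGF_le (hz0 : 0 < z) (hz : z < 1/4) {ρ : ℝ} (hρ0 : 0 ≤ ρ)
    (hρ : 1 + z * ρ^2 ≤ ρ) : catGF z ≤ ρ :=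
  Real.tsum_le_of_sum_range_le (fun n => by positivity)
    (catGF_partial_le hz0 hz hρ0 hρ)

end GF2
section Conv
open Finset

private lemma central_eq (m : ℕ) : (2*m).choose m = (m+1) * catalan m := by
  rw [succ_mul_catalan_eq_centralBinom, Nat.centralBinom]

private lemma key_conv (n : ℕ) :
    2 * ∑ i ∈ range (n+1), catalan i * (2*(n-i)).choose (n-i) = (2*(n+1)).choose (n+1) := by
  have hL : ∑ i ∈ range (n+1), catalan i * (2*(n-i)).choose (n-i)
      = ∑ i ∈ range (n+1), (n-i+1) * (catalan i * catalan (n-i)) := by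
    refine Finset.sum_congr rfl fun i _ => ?_
    rw [central_eq]; ring
  have hrefl : ∑ i ∈ range (n+1), (n-i+1) * (catalan i * catalan (n-i))
      = ∑ i ∈ range (n+1), (i+1) * (catalan i * catalan (n-i)) := by
    rw [← Finset.sum_range_reflect]
    refine Finset.sum_congr rfl fun j hj => ?_
    have hj' : j ≤ n := Nat.lt_succ_iff.mp (Finset.mem_range.mp hj)
    have h1 : n + 1 - 1 - j = n - j := by omega
    have h2 : n - (n - j) = j := by omega
    rw [h1, h2, mul_comm (catalan (n-j)) (catalan j)]
  have hsum : 2 * ∑ i ∈ range (n+1), (n-i+1) * (catalan i * catalan (n-i))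
      = (n+2) * ∑ i ∈ range (n+1), catalan i * catalan (n-i) := by
    rw [two_mul]
    nth_rewrite 2 [hrefl]
    rw [← Finset.sum_add_distrib, Finset.mul_sum]
    refine Finset.sum_congr rfl fun i hi => ?_
    have hi' : i ≤ n := Nat.lt_succ_iff.mp (Finset.mem_range.mp hi)
    have : (n - i + 1) + (i + 1) = n + 2 := by omega
    rw [← add_mul, this]
  rw [hL, hsum, central_eq, ← catalan_succ_range]

private lemma choose_central_two (n : ℕ) : (2*(n+1)).choose (n+1) = 2 * ((2*n+1).choose n) := by
  have h : 2*(n+1) = (2*n+1) + 1 := by ring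
  have hsymm : (2*n+1).choose (n+1) = (2*n+1).choose n := by
    have := (Nat.choose_symm (show n+1 ≤ 2*n+1 by omega)).symm
    rwa [show 2*n+1 - (n+1) = n by omega] at this
  rw [h, Nat.choose_succ_succ (2*n+1) n, hsymm]
  omega

private lemma choose_pascal (n k : ℕ) :
    (2*n+k+3).choose (n+1) = (2*n+k+2).choose n + (2*n+k+2).choose (n+1) := by
  have h : 2*n+k+3 = (2*n+k+2) + 1 := by ring
  rw [h, Nat.choose_succ_succ (2*n+k+2) n]

end Conv
section SGF
open Finset
variable {z : ℝ}

private noncomputable def SGF (k : ℕ) (z : ℝ) : ℝ := ∑' n, ((2*n+k).choose n : ℝ) * z^n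

private lemma SGF_zero_eq (hz0 : 0 < z) (hz : z < 1/4) :
    SGF 0 z = 1 + 2*z*catGF z * SGF 0 z := by
  have hcs := summable_catS hz0.le hz
  have hss := summable_chooseS 0 hz0.le hz
  have hnormc : Summable (fun n => ‖(catalan n : ℝ) * z^n‖) :=
    summable_norm_of_nonneg (fun n => by positivity) hcs
  have hnorms : Summable (fun n => ‖((2*n+0).choose n : ℝ) * z^n‖) :=
    summable_norm_of_nonneg (fun n => by positivity) hss
  have hC : catGF z * SGF 0 z =
      ∑' n, ∑ i ∈ range (n+1), ((catalan i : ℝ) * z^i) *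
        (((2*(n-i)+0).choose (n-i) : ℝ) * z^(n-i)) :=
    tsum_mul_tsum_eq_tsum_sum_range_of_summable_norm hnormc hnorms
  have hinner : ∀ n, (2:ℝ) * z * ∑ i ∈ range (n+1), ((catalan i : ℝ) * z^i) *
      (((2*(n-i)+0).choose (n-i) : ℝ) * z^(n-i))
      = ((2*(n+1)).choose (n+1) : ℝ) * z^(n+1) := by
    intro n
    have h1 : ∑ i ∈ range (n+1), ((catalan i : ℝ) * z^i) *
        (((2*(n-i)+0).choose (n-i) : ℝ) * z^(n-i))
        = (∑ i ∈ range (n+1), (catalan i * (2*(n-i)).choose (n-i) : ℕ)) * z^n := by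
      push_cast
      rw [Finset.sum_mul]
      refine Finset.sum_congr rfl fun i hi => ?_
      have hi' : i ≤ n := Nat.lt_succ_iff.mp (Finset.mem_range.mp hi)
      have hp : z^i * z^(n-i) = z^n := by rw [← pow_add, Nat.add_sub_cancel' hi']
      rw [add_zero, mul_mul_mul_comm, hp]
    rw [h1]
    have h2 := key_conv n
    have h2' : ((2*(n+1)).choose (n+1) : ℝ)
        = 2 * (∑ i ∈ range (n+1), (catalan i * (2*(n-i)).choose (n-i) : ℕ) : ℝ) := by
      rw [← h2]; push_cast; ring
    rw [h2']; push_cast; ring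
  have hshift := Summable.sum_add_tsum_nat_add 1 hss
  simp only [Finset.range_one, Finset.sum_singleton] at hshift
  have h0 : (((2*0+0).choose 0 : ℕ) : ℝ) * z^0 = 1 := by norm_num
  rw [h0] at hshift
  have hmain : 2*z*(catGF z * SGF 0 z) = SGF 0 z - 1 := by
    rw [hC, ← tsum_mul_left]
    have : ∑' n, 2*z*(∑ i ∈ range (n+1), ((catalan i : ℝ) * z^i) *
        (((2*(n-i)+0).choose (n-i) : ℝ) * z^(n-i)))
        = ∑' n, ((2*(n+1)+0).choose (n+1) : ℝ) * z^(n+1) := by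
      refine tsum_congr fun n => ?_
      rw [hinner n, add_zero]
    rw [this]
    have hS : SGF 0 z = ∑' n, ((2*n+0).choose n : ℝ) * z^n := rfl
    rw [hS]
    linarith [hshift]
  linarith [hmain]

private lemma SGF_one_eq (hz0 : 0 < z) (hz : z < 1/4) :
    SGF 1 z = catGF z * SGF 0 z := by
  have hss0 := summable_chooseS 0 hz0.le hz
  have hss1 := summable_chooseS 1 hz0.le hz
  have hshift := Summable.sum_add_tsum_nat_add 1 hss0
  simp only [Finset.range_one, Finset.sum_singleton] at hshift
  have h0 : (((2*0+0).choose 0 : ℕ) : ℝ) * z^0 = 1 := by norm_num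
  rw [h0] at hshift
  -- ∑' n, choose(2(n+1), n+1) z^(n+1) = S0 - 1
  have hA : ∑' n, ((2*(n+1)+0).choose (n+1) : ℝ) * z^(n+1) = SGF 0 z - 1 := by
    have hS : SGF 0 z = ∑' n, ((2*n+0).choose n : ℝ) * z^n := rfl
    rw [hS]; linarith [hshift]
  have hB : ∑' n, ((2*(n+1)+0).choose (n+1) : ℝ) * z^(n+1) = 2 * z * SGF 1 z := by
    have hS1 : SGF 1 z = ∑' n, ((2*n+1).choose n : ℝ) * z^n := rfl
    rw [hS1, ← tsum_mul_left]
    refine tsum_congr fun n => ?_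
    have := choose_central_two n
    have hcast : ((2*(n+1)+0).choose (n+1) : ℝ) = 2 * ((2*n+1).choose n : ℝ) := by
      rw [add_zero]; exact_mod_cast this
    rw [hcast]; ring
  have h20 := SGF_zero_eq hz0 hz
  have hzne : (2:ℝ)*z ≠ 0 := by positivity
  have : 2*z*SGF 1 z = 2*z*(catGF z * SGF 0 z) := by
    rw [← hB, hA]; linarith [h20]
  exact mul_left_cancel₀ hzne this

private lemma SGF_rec (hz0 : 0 < z) (hz : z < 1/4) (k : ℕ) :
    SGF (k+1) z = SGF k z + z * SGF (k+2) z := by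
  have hssk := summable_chooseS k hz0.le hz
  have hssk1 := summable_chooseS (k+1) hz0.le hz
  have hssk2 := summable_chooseS (k+2) hz0.le hz
  -- shift of SGF (k+1)
  have hshift1 := Summable.sum_add_tsum_nat_add 1 hssk1
  simp only [Finset.range_one, Finset.sum_singleton] at hshift1
  have h01 : (((2*0+(k+1)).choose 0 : ℕ) : ℝ) * z^0 = 1 := by norm_num
  rw [h01] at hshift1
  -- shift of SGF k
  have hshiftk := Summable.sum_add_tsum_nat_add 1 hssk
  simp only [Finset.range_one, Finset.sum_singleton] at hshiftk
  have h0k : (((2*0+k).choose 0 : ℕ) : ℝ) * z^0 = 1 := by norm_num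
  rw [h0k] at hshiftk
  -- summability of the two pieces
  have hsumA : Summable (fun n => ((2*n+k+2).choose n : ℝ) * z^(n+1)) := by
    have := hssk2.mul_right z
    refine this.congr fun n => ?_
    have : (2*n+(k+2)) = 2*n+k+2 := by ring
    rw [this, pow_succ]; ring
  have hsumB : Summable (fun n => ((2*n+k+2).choose (n+1) : ℝ) * z^(n+1)) := by
    have := (summable_nat_add_iff 1).mpr hssk
    refine this.congr fun n => ?_
    have : (2*(n+1)+k) = 2*n+k+2 := by ring
    rw [this]
  have hsplit : ∑' n, ((2*n+(k+1)+2).choose (n+1) : ℝ) * z^(n+1)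
      = (∑' n, ((2*n+k+2).choose n : ℝ) * z^(n+1))
        + ∑' n, ((2*n+k+2).choose (n+1) : ℝ) * z^(n+1) := by
    rw [← Summable.tsum_add hsumA hsumB]
    refine tsum_congr fun n => ?_
    have hp : (2*n+(k+1)+2) = 2*n+k+3 := by ring
    rw [hp, choose_pascal n k]
    push_cast; ring
  have hA : ∑' n, ((2*n+k+2).choose n : ℝ) * z^(n+1) = z * SGF (k+2) z := by
    have hS : SGF (k+2) z = ∑' n, ((2*n+(k+2)).choose n : ℝ) * z^n := rfl
    rw [hS, ← tsum_mul_left]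
    refine tsum_congr fun n => ?_
    have : (2*n+(k+2)) = 2*n+k+2 := by ring
    rw [this, pow_succ]; ring
  have hB : ∑' n, ((2*n+k+2).choose (n+1) : ℝ) * z^(n+1) = SGF k z - 1 := by
    have hS : SGF k z = ∑' n, ((2*n+k).choose n : ℝ) * z^n := rfl
    rw [hS]
    have : ∑' n, ((2*n+k+2).choose (n+1) : ℝ) * z^(n+1)
        = ∑' n, ((2*(n+1)+k).choose (n+1) : ℝ) * z^(n+1) := by
      refine tsum_congr fun n => ?_
      have : (2*(n+1)+k) = 2*n+k+2 := by ring
      rw [this]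
    rw [this]; linarith [hshiftk]
  have hL : SGF (k+1) z = 1 + ∑' n, ((2*n+(k+1)+2).choose (n+1) : ℝ) * z^(n+1) := by
    have hS : SGF (k+1) z = ∑' n, ((2*n+(k+1)).choose n : ℝ) * z^n := rfl
    rw [hS]
    have : ∑' n, ((2*n+(k+1)+2).choose (n+1) : ℝ) * z^(n+1)
        = ∑' n, ((2*(n+1)+(k+1)).choose (n+1) : ℝ) * z^(n+1) := by
      refine tsum_congr fun n => ?_
      have : (2*(n+1)+(k+1)) = 2*n+(k+1)+2 := by ring
      rw [this]
    rw [this]; linarith [hshift1]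
  rw [hL, hsplit, hA, hB]; ring

private lemma SGF_pow (hz0 : 0 < z) (hz : z < 1/4) (k : ℕ) :
    SGF k z = catGF z ^ k * SGF 0 z := by
  have key : ∀ k : ℕ, SGF k z = catGF z ^ k * SGF 0 z ∧
      SGF (k+1) z = catGF z ^ (k+1) * SGF 0 z := by
    intro k
    induction k with
    | zero => exact ⟨by simp, by simpa using SGF_one_eq hz0 hz⟩
    | succ k ih =>
      refine ⟨ih.2, ?_⟩
      have hrec := SGF_rec hz0 hz k
      have hq := catGF_quad hz0.le hz
      have hzne : z ≠ 0 := ne_of_gt hz0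
      have : z * SGF (k+2) z = z * (catGF z ^ (k+2) * SGF 0 z) := by
        have : z * SGF (k+2) z = SGF (k+1) z - SGF k z := by linarith [hrec]
        rw [this, ih.1, ih.2]
        have hstep : catGF z ^ (k+1) - catGF z ^ k = z * catGF z ^ (k+2) := by
          have h' : catGF z ^ (k+1) - catGF z ^ k = catGF z ^ k * (catGF z - 1) := by ring
          rw [h', ← hq]; ring
        linear_combination hstep * SGF 0 z
      exact mul_left_cancel₀ hzne this
  exact (key k).1

end SGF
section Int
open MeasureTheory Real Set

private lemma integral_pow_exp {s : ℝ} (hs : 0 < s) (M : ℕ) :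
    ∫ t in Ioi (0:ℝ), t^M * Real.exp (-(s*t)) = (M.factorial : ℝ) / s^(M+1) := by
  have h := integral_rpow_mul_exp_neg_mul_Ioi (a := (M+1 : ℝ)) (by positivity) hs
  have h1 : ∀ t : ℝ, t ^ ((M+1:ℝ) - 1) = t ^ M := by
    intro t
    rw [show (M+1:ℝ) - 1 = (M:ℝ) by ring, Real.rpow_natCast]
  simp only [h1] at h
  rw [h]
  have h2 : ((1:ℝ)/s) ^ (M+1:ℝ) = 1 / s^(M+1) := by
    rw [show (M+1:ℝ) = ((M+1 : ℕ) : ℝ) by push_cast; ring, Real.rpow_natCast]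
    rw [div_pow, one_pow]
  have h3 : Real.Gamma (M+1:ℝ) = (M.factorial : ℝ) := Real.Gamma_nat_eq_factorial M
  rw [h2, h3]
  ring

private lemma integrable_pow_exp {s : ℝ} (hs : 0 < s) (M : ℕ) :
    IntegrableOn (fun t : ℝ => t^M * Real.exp (-(s*t))) (Ioi (0:ℝ)) := by
  have h := integrableOn_rpow_mul_exp_neg_mul_rpow (p := 1) (s := (M:ℝ))
    (neg_one_lt_zero.trans_le (Nat.cast_nonneg M)) one_pos hs
  refine h.congr_fun (fun t ht => ?_) measurableSet_Ioi
  simp only [Real.rpow_natCast, Real.rpow_one, neg_mul]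

end Int




/-- Modified Bessel function of the first kind of integer order `k ≥ 0`,
defined by its power series. -/
noncomputable def besselI (k : ℕ) (t : ℝ) : ℝ :=
  ∑' n : ℕ, (t / 2) ^ (2 * n + k) / (n.factorial * (n + k).factorial)

/-- The `G`-transform `Gf(u) = (u⁻² - q) ∫_0^∞ e^{-(qu + 1/u)t} e^{(q+1)t} f(t) dt`. -/
noncomputable def Gtransform (q : ℝ) (f : ℝ → ℝ) (u : ℝ) : ℝ :=
  (u ^ (-2 : ℤ) - q) *
    ∫ t in Set.Ioi (0:ℝ), Real.exp (-(q * u + 1 / u) * t) * Real.exp ((q + 1) * t) * f t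


open MeasureTheory Real Set in
theorem Gtransform_heat_building_block (q : ℝ) (hq : 1 < q) (k : ℕ) (u : ℝ)
    (hu0 : 0 < u) (hu : u < 1 / q) :
    Gtransform q
      (fun t => Real.exp (-(q + 1) * t) * q ^ (-(k : ℝ) / 2) * besselI k (2 * Real.sqrt q * t))
      u = u ^ ((k : ℤ) - 1) := by
  have hq0 : 0 < q := by linarith
  have hqu : q * u < 1 := by
    have := (lt_div_iff₀ hq0).mp hu
    linarith [this]
  have hu1 : u < 1 := by
    have h1 : 1/q < 1 := by rw [div_lt_one hq0]; exact hq
    linarith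
  have hqu2 : q * u^2 < 1 := by nlinarith
  obtain ⟨s, hs_def⟩ : ∃ x : ℝ, x = q*u + 1/u := ⟨_, rfl⟩
  have hs0 : 0 < s := by rw [hs_def]; positivity
  obtain ⟨ρ, hρ_def⟩ : ∃ x : ℝ, x = q*u^2 + 1 := ⟨_, rfl⟩
  have hρ0 : 0 < ρ := by rw [hρ_def]; positivity
  have hus : u * s = ρ := by rw [hρ_def, hs_def]; field_simp
  obtain ⟨z, hz_def⟩ : ∃ x : ℝ, x = q / s^2 := ⟨_, rfl⟩
  have hz0 : 0 < z := by rw [hz_def]; positivity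
  have hzs : z * s^2 = q := by rw [hz_def]; field_simp
  have hs2u : s^2 * u^2 = ρ^2 := by nlinarith [hus]
  have hzρ2 : z * ρ^2 = q * u^2 := by
    rw [← hs2u, show z * (s^2*u^2) = (z*s^2)*u^2 from by ring, hzs]
  have hz4 : z < 1/4 := by
    have hlt : q*u^2 - 1 < 0 := by linarith
    have hpos : 0 < (q*u^2-1)^2 := by nlinarith
    have h4 : 4*q*u^2 < ρ^2 := by nlinarith
    have hu2 : (0:ℝ) < u^2 := by positivity
    have h4' : (4*q) * u^2 < s^2 * u^2 := by rw [hs2u]; nlinarith [h4]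
    have h5 : 4*q < s^2 := (mul_lt_mul_iff_left₀ hu2).mp h4'
    rw [hz_def, div_lt_div_iff₀ (by positivity) (by norm_num : (0:ℝ) < 4)]
    linarith
  -- the Catalan generating function value
  obtain ⟨c, hc_def⟩ : ∃ x : ℝ, x = catGF z := ⟨_, rfl⟩
  have hc0 : 0 ≤ c := hc_def ▸ tsum_nonneg fun n => by positivity
  have hcq : z * c^2 = c - 1 := by rw [hc_def]; exact catGF_quad hz0.le hz4
  have hρq : z * ρ^2 = ρ - 1 := by rw [hzρ2, hρ_def]; ring
  have hcle : c ≤ ρ := by rw [hc_def]; exact catGF_le hz0 hz4 hρ0.le (le_of_eq (by rw [hzρ2, hρ_def]; ring))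
  have hcρ : c = ρ := by
    rcases eq_or_lt_of_le hcle with h|h
    · exact h
    · exfalso
      have hne : c - ρ ≠ 0 := by intro h'; nlinarith
      have hfac : (z*(c+ρ))*(c-ρ) = 1*(c-ρ) := by linear_combination hcq - hρq
      have h1 : z*(c+ρ) = 1 := mul_right_cancel₀ hne hfac
      have h2 : z*c ≤ z*ρ := mul_le_mul_of_nonneg_left hcle hz0.le
      nlinarith [hzρ2, hqu2, hρ0]
  obtain ⟨S0, hS0_def⟩ : ∃ x : ℝ, x = SGF 0 z := ⟨_, rfl⟩
  have hS0eq : S0 = 1 + 2*z*c*S0 := by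
    rw [hS0_def, hc_def]; exact SGF_zero_eq hz0 hz4
  have h1mq : 0 < 1 - q*u^2 := by linarith
  have hS0 : S0 * (1 - q*u^2) = ρ := by
    rw [hcρ] at hS0eq
    linear_combination ρ*hS0eq + 2*S0*hzρ2 - S0*hρ_def
  have hSk : SGF k z = ρ^k * S0 := by rw [SGF_pow hz0 hz4 k, ← hc_def, hcρ, hS0_def]
  -- the integral
  obtain ⟨F, hF_def⟩ : ∃ F : ℕ → ℝ → ℝ, F = fun n t =>
    (Real.sqrt q)^(2*n+k) / ((n.factorial : ℝ) * ((n+k).factorial : ℝ))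
      * (t^(2*n+k) * Real.exp (-(s*t))) := ⟨_, rfl⟩
  have h_int : ∀ n, Integrable (F n) (volume.restrict (Ioi (0:ℝ))) := by
    intro n
    rw [hF_def]
    exact (integrable_pow_exp hs0 (2*n+k)).const_mul _
  have hFval : ∀ n, ∫ t in Ioi (0:ℝ), F n t
      = (Real.sqrt q)^k / s^(k+1) * (((2*n+k).choose n : ℝ) * z^n) := by
    intro n
    rw [hF_def]
    simp only
    rw [MeasureTheory.integral_const_mul, integral_pow_exp hs0]
    have hsq : (Real.sqrt q)^(2*n+k) = (Real.sqrt q)^k * q^n := by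
      rw [pow_add, pow_mul, Real.sq_sqrt hq0.le, mul_comm]
    have hchoose : (((2*n+k).choose n : ℕ) : ℝ)
        = ((2*n+k).factorial : ℝ) / ((n.factorial : ℝ) * ((n+k).factorial : ℝ)) := by
      rw [Nat.cast_choose ℝ (show n ≤ 2*n+k by omega)]
      rw [show 2*n+k-n = n+k by omega]
    rw [hsq, hchoose, hz_def]
    have hfn : (n.factorial : ℝ) ≠ 0 := Nat.cast_ne_zero.mpr n.factorial_ne_zero
    have hfnk : ((n+k).factorial : ℝ) ≠ 0 := Nat.cast_ne_zero.mpr (n+k).factorial_ne_zero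
    have hsne : s ≠ 0 := ne_of_gt hs0
    field_simp
    have hss : s ^ (n*2) * s⁻¹ ^ (n*2) = 1 := by rw [← mul_pow, mul_inv_cancel₀ hsne, one_pow]
    linear_combination (-(q^n*s*s^k)) * hss
  have hnorm_val : ∀ n, ∫ t in Ioi (0:ℝ), ‖F n t‖ = ∫ t in Ioi (0:ℝ), F n t := by
    intro n
    refine setIntegral_congr_fun measurableSet_Ioi fun t ht => ?_
    have ht0 : 0 < t := ht
    rw [Real.norm_eq_abs, abs_of_nonneg (by simp only [hF_def]; positivity)]
  have hsummable : Summable (fun n => ∫ t in Ioi (0:ℝ), ‖F n t‖) := by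
    simp only [hnorm_val, hFval]
    exact ((summable_chooseS k hz0.le hz4).mul_left _)
  have hswap := MeasureTheory.integral_tsum_of_summable_integral_norm h_int hsummable
  have hpt : ∀ t : ℝ, Real.exp (-(s*t)) * besselI k (2*Real.sqrt q*t) = ∑' n, F n t := by
    intro t
    rw [besselI, ← tsum_mul_left]
    refine tsum_congr fun n => ?_
    simp only [hF_def]
    rw [show 2*Real.sqrt q*t/2 = Real.sqrt q * t from by ring, mul_pow]
    ring
  have hint_eq : ∫ t in Ioi (0:ℝ), Real.exp (-(s*t)) * besselI k (2*Real.sqrt q*t)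
      = (Real.sqrt q)^k / s^(k+1) * SGF k z := by
    have h1 : ∫ t in Ioi (0:ℝ), Real.exp (-(s*t)) * besselI k (2*Real.sqrt q*t)
        = ∫ t in Ioi (0:ℝ), ∑' n, F n t := by
      refine setIntegral_congr_fun measurableSet_Ioi fun t _ => hpt t
    rw [h1, ← hswap]
    have : ∀ n : ℕ, ∫ t in Ioi (0:ℝ), F n t
        = (Real.sqrt q)^k / s^(k+1) * (((2*n+k).choose n : ℝ) * z^n) := hFval
    rw [tsum_congr this, tsum_mul_left]
    rfl
  -- assemble
  rw [Gtransform]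
  have hcongr : (fun t => Real.exp (-(q*u+1/u)*t) * Real.exp ((q+1)*t) *
      (Real.exp (-(q+1)*t) * q ^ (-(k:ℝ)/2) * besselI k (2*Real.sqrt q*t)))
      = fun t => q ^ (-(k:ℝ)/2) * (Real.exp (-(s*t)) * besselI k (2*Real.sqrt q*t)) := by
    funext t
    rw [show Real.exp (-(q*u+1/u)*t) * Real.exp ((q+1)*t) *
        (Real.exp (-(q+1)*t) * q ^ (-(k:ℝ)/2) * besselI k (2*Real.sqrt q*t))
        = (Real.exp (-(q*u+1/u)*t) * Real.exp ((q+1)*t) * Real.exp (-(q+1)*t))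
          * (q ^ (-(k:ℝ)/2) * besselI k (2*Real.sqrt q*t)) from by ring,
      ← Real.exp_add, ← Real.exp_add,
      show -(q*u+1/u)*t + (q+1)*t + -(q+1)*t = -(s*t) from by rw [hs_def]; ring]
    ring
  rw [hcongr, MeasureTheory.integral_const_mul, hint_eq, hSk]
  -- final algebra
  have hsqrtk : q ^ (-(k:ℝ)/2) * (Real.sqrt q)^k = 1 := by
    rw [Real.sqrt_eq_rpow, ← Real.rpow_natCast (q ^ ((1:ℝ)/2)) k, ← Real.rpow_mul hq0.le,
      ← Real.rpow_add hq0]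
    rw [show -(k:ℝ)/2 + 1/2*(k:ℝ) = 0 from by ring, Real.rpow_zero]
  have hS0v : S0 = ρ / (1 - q*u^2) := by
    rw [eq_div_iff (ne_of_gt h1mq)]; exact hS0
  have hsv : s = ρ / u := by
    rw [eq_div_iff (ne_of_gt hu0)]; linarith [hus]
  have hzpow : (u:ℝ) ^ (-2:ℤ) = 1/u^2 := by
    rw [zpow_neg, ← zpow_natCast u 2]
    norm_num
  have hrhs : (u:ℝ) ^ ((k:ℤ) - 1) = u^k / u := by
    rw [zpow_sub₀ (ne_of_gt hu0), zpow_natCast, zpow_one]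
  rw [hzpow, hrhs, hS0v, hsv]
  have hρk : (0:ℝ) < ρ^(k+1) := by positivity
  rw [show (q ^ (-(k:ℝ)/2) * ((Real.sqrt q)^k / (ρ/u)^(k+1) * (ρ^k * (ρ/(1-q*u^2)))))
      = (q ^ (-(k:ℝ)/2) * (Real.sqrt q)^k) * (ρ^k * (ρ/(1-q*u^2)) / (ρ/u)^(k+1)) from by ring,
    hsqrtk, one_mul]
  rw [div_pow]
  have h1mq' : 1 - q*u^2 ≠ 0 := ne_of_gt h1mq
  have h1mq'' : 1 - u^2*q ≠ 0 := by rw [mul_comm]; exact h1mq'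
  field_simp
  ring
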